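/- Let k be a field, V a finite-dimensional k-vector space, 0 < r ≤ dim V an integer, and w ∈ ⋀^r V a nonzero vector spanning a line L. Define α : V → ⋀^{r+1} V by α(v) = v ∧ w. Then ⋀^r (ker α) ⊆ L; in particular, if dim ker α = r, then ⋀^r (ker α) = L. -/

import Mathlib

open ExteriorAlgebra

section Aux

variable {k V : Type*} [Field k] [AddCommGroup V] [Module k V]

lemma aux_dual {j : ℕ} {v : Fin (j+1) → V} (hv : LinearIndependent k v) :
    ∃ φ : Module.Dual k V, φ (v 0) = 1 ∧ ∀ i : Fin j, φ (v i.succ) = 0 := by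
  have h0 : v 0 ∉ Submodule.span k (v '' {i | i ≠ 0}) :=
    hv.notMem_span_image (by simp)
  obtain ⟨f, hf0, hf⟩ := Submodule.exists_dual_map_eq_bot_of_notMem h0 inferInstance
  refine ⟨(f (v 0))⁻¹ • f, by simp [inv_mul_cancel₀ hf0], fun i => ?_⟩
  have hmem : v i.succ ∈ Submodule.span k (v '' {i | i ≠ 0}) :=
    Submodule.subset_span ⟨i.succ, by simp [Fin.succ_ne_zero], rfl⟩
  have : f (v i.succ) ∈ (Submodule.span k (v '' {i | i ≠ 0})).map f :=
    Submodule.mem_map_of_mem hmem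
  rw [hf] at this
  simp only [Submodule.mem_bot] at this
  simp [this]

lemma aux_factor : ∀ (j : ℕ) (v : Fin j → V), LinearIndependent k v →
    ∀ w : ExteriorAlgebra k V, (∀ i, ι k (v i) * w = 0) →
    ∃ u, w = (List.ofFn fun i => ι k (v i)).prod * u := by
  intro j
  induction j with
  | zero => exact fun v _ w _ => ⟨w, by simp⟩
  | succ j IH =>
    intro v hv w hw
    obtain ⟨φ, hφ0, hφs⟩ := aux_dual hv
    set u₀ := CliffordAlgebra.contractLeft φ w with hu₀
    have key : ∀ a : V, CliffordAlgebra.contractLeft φ (ι k a * w)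
        = φ a • w - ι k a * u₀ := fun a => CliffordAlgebra.contractLeft_ι_mul φ a w
    have hw0 : w = ι k (v 0) * u₀ := by
      have := key (v 0)
      rw [hw 0, map_zero, hφ0, one_smul, eq_comm, sub_eq_zero] at this
      exact this
    have htail : ∀ i : Fin j, ι k (v i.succ) * u₀ = 0 := by
      intro i
      have := key (v i.succ)
      rw [hw i.succ, map_zero, hφs i, zero_smul, zero_sub, eq_comm, neg_eq_zero] at this
      exact this
    obtain ⟨u, hu⟩ := IH (fun i => v i.succ)
      (hv.comp Fin.succ (Fin.succ_injective j)) u₀ htail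
    refine ⟨u, ?_⟩
    rw [List.ofFn_succ, List.prod_cons, mul_assoc, ← hu, hw0]

lemma aux_grade {r : ℕ} {p w u : ExteriorAlgebra k V} (hp : p ∈ ⋀[k]^r V)
    (hw : w ∈ ⋀[k]^r V) (h : w = p * u) : ∃ c : k, w = c • p := by
  classical
  set 𝒜 : ℕ → Submodule k (ExteriorAlgebra k V) := fun i => ⋀[k]^i V with h𝒜
  have h0 : (DirectSum.decompose 𝒜 u 0 : ExteriorAlgebra k V) ∈ 𝒜 0 :=
    SetLike.coe_mem _
  have hwp : w = p * (DirectSum.decompose 𝒜 u 0 : ExteriorAlgebra k V) := by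
    conv_lhs => rw [← DirectSum.decompose_of_mem_same 𝒜 hw, h]
    have := DirectSum.coe_decompose_mul_add_of_left_mem (𝒜 := 𝒜) (i := r) (j := 0)
      hp (b := u)
    rw [add_zero] at this
    rw [this]
  have h0' : (DirectSum.decompose 𝒜 u 0 : ExteriorAlgebra k V)
      ∈ (1 : Submodule k (ExteriorAlgebra k V)) := by
    have h1 : 𝒜 0 = 1 := pow_zero _
    exact h1 ▸ h0
  obtain ⟨c, hc⟩ := Submodule.mem_one.mp h0'
  exact ⟨c, by rw [hwp, ← hc, ← Algebra.commutes, ← Algebra.smul_def]⟩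

lemma aux_core {r : ℕ} {w : ExteriorAlgebra k V} (hw : w ∈ ⋀[k]^r V)
    (v : Fin r → V) (hv : LinearIndependent k v) (h : ∀ i, ι k (v i) * w = 0) :
    ∃ c : k, w = c • (List.ofFn fun i => ι k (v i)).prod := by
  obtain ⟨u, hu⟩ := aux_factor r v hv w h
  have hp : (List.ofFn fun i => ι k (v i)).prod ∈ ⋀[k]^r V := by
    rw [← ιMulti_apply]
    exact ιMulti_range k r ⟨v, rfl⟩
  exact aux_grade hp hw hu


end Aux

/-- if `w` is a nonzero element of `⋀^r V` spanning the line `L`, and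
`α : V → ⋀^(r+1) V` is `v ↦ ι v * w`, then the span of `r`-fold wedge products of
elements of `ker α` is contained in `L`; if moreover `dim ker α = r`, it equals `L`. -/
theorem stmt_0 {k V : Type*} [Field k] [AddCommGroup V] [Module k V]
    [FiniteDimensional k V] (r : ℕ) (hr : 0 < r) (hrn : r ≤ Module.finrank k V)
    (w : ExteriorAlgebra k V) (hw : w ∈ ⋀[k]^r V) (hw0 : w ≠ 0) :
    Submodule.span k {x : ExteriorAlgebra k V | ∃ v : Fin r → V,
        (∀ i, ExteriorAlgebra.ι k (v i) * w = 0) ∧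
        x = (List.ofFn fun i => ExteriorAlgebra.ι k (v i)).prod}
      ≤ Submodule.span k {w} ∧
    (Module.finrank k
        (LinearMap.ker ((LinearMap.mulRight k w).comp
          (ExteriorAlgebra.ι k : V →ₗ[k] ExteriorAlgebra k V))) = r →
      Submodule.span k {x : ExteriorAlgebra k V | ∃ v : Fin r → V,
          (∀ i, ExteriorAlgebra.ι k (v i) * w = 0) ∧
          x = (List.ofFn fun i => ExteriorAlgebra.ι k (v i)).prod}
        = Submodule.span k {w}) := by
  have part1 : Submodule.span k {x : ExteriorAlgebra k V | ∃ v : Fin r → V,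
      (∀ i, ExteriorAlgebra.ι k (v i) * w = 0) ∧
      x = (List.ofFn fun i => ExteriorAlgebra.ι k (v i)).prod}
      ≤ Submodule.span k {w} := by
    rw [Submodule.span_le]
    rintro x ⟨v, hvw, rfl⟩
    by_cases hv : LinearIndependent k v
    · obtain ⟨c, hc⟩ := aux_core hw v hv hvw
      have hc0 : c ≠ 0 := fun h => hw0 (by rw [hc, h, zero_smul])
      have hx : (List.ofFn fun i => ι k (v i)).prod = c⁻¹ • w := by
        rw [hc, smul_smul, inv_mul_cancel₀ hc0, one_smul]
      rw [SetLike.mem_coe, hx]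
      exact Submodule.smul_mem _ _ (Submodule.mem_span_singleton_self w)
    · have hx : (List.ofFn fun i => ι k (v i)).prod = 0 := by
        rw [← ιMulti_apply]
        exact AlternatingMap.map_linearDependent _ v hv
      rw [SetLike.mem_coe, hx]
      exact Submodule.zero_mem _
  refine ⟨part1, fun hker => le_antisymm part1 ?_⟩
  set K := LinearMap.ker ((LinearMap.mulRight k w).comp
      (ExteriorAlgebra.ι k : V →ₗ[k] ExteriorAlgebra k V)) with hK
  let b : Module.Basis (Fin r) k K := Module.finBasisOfFinrankEq k K hker
  set v : Fin r → V := fun i => ((b i : K) : V) with hv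
  have hvind : LinearIndependent k v := by
    have := b.linearIndependent.map' K.subtype K.ker_subtype
    exact this
  have hrel : ∀ i, ι k (v i) * w = 0 := by
    intro i
    have := (b i).2
    rw [LinearMap.mem_ker, LinearMap.comp_apply, LinearMap.mulRight_apply] at this
    exact this
  obtain ⟨c, hc⟩ := aux_core hw v hvind hrel
  rw [Submodule.span_le, Set.singleton_subset_iff, SetLike.mem_coe]
  have hpmem : (List.ofFn fun i => ι k (v i)).prod ∈ {x : ExteriorAlgebra k V |
      ∃ v : Fin r → V, (∀ i, ExteriorAlgebra.ι k (v i) * w = 0) ∧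
      x = (List.ofFn fun i => ExteriorAlgebra.ι k (v i)).prod} := ⟨v, hrel, rfl⟩
  have hmem := Submodule.smul_mem _ c (Submodule.subset_span hpmem)
  rwa [← hc] at hmem
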